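/- Let M = 1, t > 0, x ∈ ℝ, and let C₀ be a contour from e^{3iπ/4}∞ to e^{−iπ/4}∞ passing below z = i. Define D(t,x) := ∫_{C₀} e^{−i(z−x)²/(4t)} [ (t−x+i) + 2i(i−x)/(z−i) + 4t/(z−i)² ] dz. Then D(t,x) = (t−(x+i)) ∫_{C₀} e^{−i(z−x)²/(4t)} dz, and consequently −2 Im(∂ₓ log D(t,x)) = 2/((x−t)² + 1). -/

import Mathlib

open MeasureTheory Complex Filter Set Topology

/-- The contour `C₀`: the line through `-i` in direction `e^{-iπ/4}` (from `e^{3iπ/4}∞`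
to `e^{-iπ/4}∞`, passing below `z = i`). -/
noncomputable def c0path (s : ℝ) : ℂ := -Complex.I + Complex.exp (-(Real.pi / 4) * Complex.I) * s

/-- `D(t,x) = ∫_{C₀} e^{-i(z-x)²/(4t)} [(t-x+i) + 2i(i-x)/(z-i) + 4t/(z-i)²] dz`. -/
noncomputable def Dfun (t : ℝ) (x : ℂ) : ℂ :=
  ∫ s : ℝ, Complex.exp (-Complex.I * (c0path s - x) ^ 2 / (4 * t)) *
      (((t : ℂ) - x + Complex.I) + 2 * Complex.I * (Complex.I - x) / (c0path s - Complex.I)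
        + 4 * t / (c0path s - Complex.I) ^ 2) *
      Complex.exp (-(Real.pi / 4) * Complex.I)

lemma omega_eq : Complex.exp (-(Real.pi / 4) * Complex.I)
    = (Real.sqrt 2 / 2 : ℝ) * (1 - Complex.I) := by
  have h : (-(Real.pi / 4) * Complex.I) = ((-(Real.pi/4) : ℝ) : ℂ) * Complex.I := by
    push_cast; ring
  rw [h, Complex.exp_mul_I, ← Complex.ofReal_cos, ← Complex.ofReal_sin,
    Real.cos_neg, Real.sin_neg, Real.cos_pi_div_four, Real.sin_pi_div_four]
  push_cast; ring

lemma omega_sq : (Complex.exp (-(Real.pi / 4) * Complex.I)) ^ 2 = -Complex.I := by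
  rw [omega_eq]
  have h2 : ((Real.sqrt 2 : ℝ) : ℂ) ^ 2 = 2 := by
    norm_cast
    rw [Real.sq_sqrt]; norm_num
  push_cast
  ring_nf
  rw [h2, Complex.I_sq]
  ring

lemma omega_norm : ‖Complex.exp (-(Real.pi / 4) * Complex.I)‖ = 1 := by
  rw [Complex.norm_exp]
  simp

lemma normSq_lower (s : ℝ) : 2 ≤ Complex.normSq (c0path s - Complex.I) := by
  have h2 : Real.sqrt 2 ^ 2 = 2 := Real.sq_sqrt (by norm_num)
  rw [c0path, omega_eq]
  simp [Complex.normSq_apply]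
  nlinarith [sq_nonneg (s + Real.sqrt 2), Real.sq_sqrt (show (0:ℝ) ≤ 2 by norm_num)]

lemma c0_ne (s : ℝ) : c0path s - Complex.I ≠ 0 := by
  intro h
  have := normSq_lower s
  rw [h] at this; simp at this; linarith

lemma norm_c0_lower (s : ℝ) : Real.sqrt 2 ≤ ‖c0path s - Complex.I‖ := by
  rw [← Real.sqrt_sq (norm_nonneg _)]
  apply Real.sqrt_le_sqrt
  rw [← Complex.normSq_eq_norm_sq]
  exact normSq_lower s

lemma c0_cont : Continuous c0path := by unfold c0path; fun_prop

noncomputable def bC (t : ℝ) : ℂ := ((-(4*t)⁻¹ : ℝ) : ℂ)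
noncomputable def cC (t : ℝ) (w : ℂ) : ℂ :=
  -Complex.I * Complex.exp (-(Real.pi/4)*Complex.I) * (-Complex.I - w) / (2*t)
noncomputable def dC (t : ℝ) (w : ℂ) : ℂ := -Complex.I * (-Complex.I - w)^2 / (4*t)

lemma exponent_eq (t : ℝ) (w : ℂ) (s : ℝ) :
    -Complex.I * (c0path s - w)^2 / (4*(t:ℂ)) = bC t * s^2 + cC t w * s + dC t w := by
  unfold bC cC dC
  rw [c0path]
  have ho := omega_sq
  set ω := Complex.exp (-(Real.pi/4)*Complex.I) with hω
  push_cast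
  linear_combination (-Complex.I * (s:ℂ)^2 / (4*(t:ℂ))) * ho
    + ((s:ℂ)^2 * (4*(t:ℂ))⁻¹) * Complex.I_sq

lemma bC_re (t : ℝ) (ht : 0 < t) : (bC t).re < 0 := by
  simp [bC]; positivity

lemma dc_eq (t : ℝ) (ht : t ≠ 0) (w : ℂ) : dC t w - (cC t w)^2 / (4 * bC t) = 0 := by
  unfold bC cC dC
  have h4t : (4*(t:ℂ)) ≠ 0 := by simpa using ht
  have hbne : ((-(4*t)⁻¹ : ℝ) : ℂ) ≠ 0 := by simp [ht]
  have htc : (t:ℂ) ≠ 0 := by simpa using ht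
  have ho := omega_sq
  set ω := Complex.exp (-(Real.pi/4)*Complex.I) with hω
  push_cast
  field_simp
  linear_combination (Complex.I * (-Complex.I - w)^2 * 4 * Complex.I) * ho
    - (4 * Complex.I * (-Complex.I - w)^2) * Complex.I_sq

noncomputable def Kc (t : ℝ) : ℂ := ((Real.pi : ℂ) / -(bC t)) ^ (1/2 : ℂ)

lemma Kc_ne (t : ℝ) (ht : t ≠ 0) : Kc t ≠ 0 := by
  unfold Kc
  intro h
  rw [Complex.cpow_eq_zero_iff] at h
  have hb : bC t ≠ 0 := by simp [bC, ht]
  exact (div_ne_zero (by exact_mod_cast Real.pi_ne_zero) (neg_ne_zero.mpr hb)) h.1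

lemma gauss (t : ℝ) (ht : 0 < t) (w : ℂ) :
    (∫ s : ℝ, Complex.exp (-Complex.I * (c0path s - w)^2 / (4*(t:ℂ)))) = Kc t := by
  have h : ∀ s : ℝ, Complex.exp (-Complex.I * (c0path s - w)^2 / (4*(t:ℂ)))
      = Complex.exp (bC t * s^2 + cC t w * s + dC t w) := fun s => by rw [exponent_eq]
  simp_rw [h]
  rw [integral_cexp_quadratic (bC_re t ht), dc_eq t ht.ne' w, Complex.exp_zero, mul_one]
  rfl

lemma gaussK (t : ℝ) (ht : 0 < t) (w : ℂ) :
    (∫ s : ℝ, Complex.exp (-Complex.I * (c0path s - w)^2 / (4*(t:ℂ))) *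
      Complex.exp (-(Real.pi/4)*Complex.I))
    = Kc t * Complex.exp (-(Real.pi/4)*Complex.I) := by
  rw [integral_mul_const, gauss t ht w]

-- integrability of exp(quadratic) * (bounded continuous)
lemma integrable_aux (t : ℝ) (ht : 0 < t) (w : ℂ) (h : ℝ → ℂ) (hc : Continuous h)
    (C : ℝ) (hC : ∀ s, ‖h s‖ ≤ C) :
    Integrable (fun s : ℝ => Complex.exp (-Complex.I * (c0path s - w)^2 / (4*(t:ℂ))) * h s) := by
  have base : Integrable (fun s : ℝ => Complex.exp (bC t * s^2 + cC t w * s + dC t w)) :=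
    integrable_cexp_quadratic' (bC_re t ht) _ _
  have h2 := base.bdd_mul hc.aestronglyMeasurable (Eventually.of_forall hC)
  have h3 : ∀ s : ℝ, h s * Complex.exp (bC t * s^2 + cC t w * s + dC t w)
      = Complex.exp (-Complex.I * (c0path s - w)^2 / (4*(t:ℂ))) * h s := fun s => by
    rw [exponent_eq t w s]; ring
  exact h2.congr (Filter.Eventually.of_forall h3)

lemma integrable_g (t : ℝ) (ht : 0 < t) (w : ℂ) :
    Integrable (fun s : ℝ => Complex.exp (-Complex.I * (c0path s - w)^2 / (4*(t:ℂ))) *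
      Complex.exp (-(Real.pi/4)*Complex.I)) :=
  integrable_aux t ht w _ continuous_const 1 (fun _ => le_of_eq omega_norm)

lemma cont_bracket (t : ℝ) (w : ℂ) :
    Continuous (fun s : ℝ => (((t : ℂ) - w + Complex.I)
      + 2 * Complex.I * (Complex.I - w) / (c0path s - Complex.I)
      + 4 * t / (c0path s - Complex.I) ^ 2) * Complex.exp (-(Real.pi/4)*Complex.I)) := by
  apply Continuous.mul _ continuous_const
  apply Continuous.add
  apply Continuous.add continuous_const
  · exact continuous_const.div (c0_cont.sub continuous_const) c0_ne
  · exact continuous_const.div ((c0_cont.sub continuous_const).pow 2)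
      (fun s => pow_ne_zero 2 (c0_ne s))

lemma bound_bracket (t : ℝ) (w : ℂ) (s : ℝ) :
    ‖(((t : ℂ) - w + Complex.I)
      + 2 * Complex.I * (Complex.I - w) / (c0path s - Complex.I)
      + 4 * t / (c0path s - Complex.I) ^ 2) * Complex.exp (-(Real.pi/4)*Complex.I)‖
    ≤ ‖(t : ℂ) - w + Complex.I‖ + ‖2 * Complex.I * (Complex.I - w)‖ / Real.sqrt 2
      + ‖4 * (t:ℂ)‖ / 2 := by
  rw [norm_mul, omega_norm, mul_one]
  have h2 : (0:ℝ) < Real.sqrt 2 := by positivity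
  have hb : ‖2 * Complex.I * (Complex.I - w) / (c0path s - Complex.I)‖
      ≤ ‖2 * Complex.I * (Complex.I - w)‖ / Real.sqrt 2 := by
    rw [norm_div]
    exact div_le_div_of_nonneg_left (norm_nonneg _) h2 (norm_c0_lower s)
  have hc : ‖4 * (t:ℂ) / (c0path s - Complex.I) ^ 2‖ ≤ ‖4 * (t:ℂ)‖ / 2 := by
    rw [norm_div, norm_pow]
    apply div_le_div_of_nonneg_left (norm_nonneg _) (by norm_num)
    nlinarith [norm_c0_lower s, Real.sq_sqrt (show (0:ℝ) ≤ 2 by norm_num), h2,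
      norm_nonneg (c0path s - Complex.I)]
  calc ‖_‖ ≤ ‖((t : ℂ) - w + Complex.I) + 2 * Complex.I * (Complex.I - w) / (c0path s - Complex.I)‖
        + ‖4 * (t:ℂ) / (c0path s - Complex.I) ^ 2‖ := norm_add_le _ _
    _ ≤ (‖(t : ℂ) - w + Complex.I‖ + ‖2 * Complex.I * (Complex.I - w) / (c0path s - Complex.I)‖)
        + ‖4 * (t:ℂ) / (c0path s - Complex.I) ^ 2‖ := by gcongr; exact norm_add_le _ _
    _ ≤ _ := add_le_add (add_le_add le_rfl hb) hc

lemma integrable_f (t : ℝ) (ht : 0 < t) (w : ℂ) :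
    Integrable (fun s : ℝ => Complex.exp (-Complex.I * (c0path s - w) ^ 2 / (4 * (t:ℂ))) *
      (((t : ℂ) - w + Complex.I) + 2 * Complex.I * (Complex.I - w) / (c0path s - Complex.I)
        + 4 * t / (c0path s - Complex.I) ^ 2) *
      Complex.exp (-(Real.pi / 4) * Complex.I)) := by
  have := integrable_aux t ht w _ (cont_bracket t w) _ (fun s => bound_bracket t w s)
  exact this.congr (Eventually.of_forall fun s => by ring)

lemma c0_hasDeriv (s : ℝ) :
    HasDerivAt c0path (Complex.exp (-(Real.pi/4)*Complex.I)) s := by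
  have h1 : HasDerivAt (fun u : ℝ => (u:ℂ)) 1 s := by
    simpa using (hasDerivAt_id s).ofReal_comp
  have h2 := (h1.const_mul (Complex.exp (-(Real.pi/4)*Complex.I))).const_add (-Complex.I)
  have h3 : c0path = fun u : ℝ => -Complex.I + Complex.exp (-(Real.pi/4)*Complex.I) * (u:ℂ) := by
    funext u; rfl
  rw [h3]
  simpa using h2

lemma hasDerivG (t : ℝ) (ht : t ≠ 0) (w : ℂ) (s : ℝ) :
    HasDerivAt
      (fun u : ℝ => -(4*(t:ℂ)) * Complex.exp (-Complex.I * (c0path u - w)^2 / (4*(t:ℂ)))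
        / (c0path u - Complex.I))
      (Complex.exp (-Complex.I * (c0path s - w) ^ 2 / (4 * (t:ℂ))) *
        (((t : ℂ) - w + Complex.I) + 2 * Complex.I * (Complex.I - w) / (c0path s - Complex.I)
          + 4 * t / (c0path s - Complex.I) ^ 2) *
        Complex.exp (-(Real.pi / 4) * Complex.I)
      - ((t:ℂ) - w - Complex.I) * (Complex.exp (-Complex.I * (c0path s - w)^2 / (4*(t:ℂ))) *
          Complex.exp (-(Real.pi/4)*Complex.I))) s := by
  have hc0 := c0_hasDeriv s
  have hsq : HasDerivAt (fun u : ℝ => (c0path u - w)^2)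
      (Complex.exp (-(Real.pi/4)*Complex.I) * (c0path s - w)
        + (c0path s - w) * Complex.exp (-(Real.pi/4)*Complex.I)) s := by
    have hm := (hc0.sub_const w).mul (hc0.sub_const w)
    have : (fun u : ℝ => (c0path u - w)^2) = fun u => (c0path u - w) * (c0path u - w) := by
      funext u; ring
    rw [this]
    exact hm
  have hE := (hsq.const_mul (-Complex.I)).div_const (4*(t:ℂ))
  have hphi := hE.cexp
  have hnum := hphi.const_mul (-(4*(t:ℂ)))
  have hden := hc0.sub_const Complex.I
  have h := hnum.div hden (c0_ne s)
  convert h using 1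
  · rfl
  · rfl
  have hz := c0_ne s
  have h4 : (4:ℂ)*(t:ℂ) ≠ 0 := by simpa using ht
  have htc : (t:ℂ) ≠ 0 := by exact_mod_cast ht
  rw [eq_div_iff (pow_ne_zero 2 hz)]
  field_simp
  ring

lemma re_quad (t : ℝ) (w : ℂ) (s : ℝ) :
    (bC t * s^2 + cC t w * s + dC t w).re
      = (bC t).re * s^2 + (cC t w).re * s + (dC t w).re := by
  simp [Complex.add_re, Complex.mul_re, ← Complex.ofReal_pow]

lemma q_atBot (t : ℝ) (ht : 0 < t) (w : ℂ) :
    Tendsto (fun s : ℝ => (bC t).re * s^2 + (cC t w).re * s + (dC t w).re) atTop atBot ∧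
    Tendsto (fun s : ℝ => (bC t).re * s^2 + (cC t w).re * s + (dC t w).re) atBot atBot := by
  have hbre := bC_re t ht
  constructor
  · have h1 : Tendsto (fun s : ℝ => (bC t).re * s + (cC t w).re) atTop atBot :=
      tendsto_atBot_add_const_right _ _ ((tendsto_const_mul_atBot_of_neg hbre).mpr tendsto_id)
    have h2 : Tendsto (fun s : ℝ => s * ((bC t).re * s + (cC t w).re)) atTop atBot :=
      Tendsto.atTop_mul_atBot₀ tendsto_id h1
    have h3 := tendsto_atBot_add_const_right _ ((dC t w).re) h2
    refine h3.congr (fun s => by ring)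
  · have h1 : Tendsto (fun s : ℝ => (bC t).re * s + (cC t w).re) atBot atTop :=
      tendsto_atTop_add_const_right _ _ ((tendsto_const_mul_atTop_of_neg hbre).mpr tendsto_id)
    have h2 : Tendsto (fun s : ℝ => s * ((bC t).re * s + (cC t w).re)) atBot atBot :=
      Tendsto.atBot_mul_atTop₀ tendsto_id h1
    have h3 := tendsto_atBot_add_const_right _ ((dC t w).re) h2
    refine h3.congr (fun s => by ring)

lemma G_norm_bound (t : ℝ) (ht : 0 < t) (w : ℂ) (s : ℝ) :
    ‖-(4*(t:ℂ)) * Complex.exp (-Complex.I * (c0path s - w)^2 / (4*(t:ℂ)))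
        / (c0path s - Complex.I)‖
      ≤ (4*t/Real.sqrt 2) * Real.exp ((bC t).re * s^2 + (cC t w).re * s + (dC t w).re) := by
  have h2 : (0:ℝ) < Real.sqrt 2 := by positivity
  rw [norm_div, norm_mul, exponent_eq t w s]
  have hnorm : ‖Complex.exp (bC t * s^2 + cC t w * s + dC t w)‖
      = Real.exp ((bC t).re * s^2 + (cC t w).re * s + (dC t w).re) := by
    rw [Complex.norm_exp, re_quad]
  rw [hnorm]
  have h4 : ‖-(4*(t:ℂ))‖ = 4*t := by
    simp [abs_of_pos ht]
  rw [h4]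
  calc 4*t * Real.exp _ / ‖c0path s - Complex.I‖
      ≤ 4*t * Real.exp _ / Real.sqrt 2 := by
        apply div_le_div_of_nonneg_left (by positivity) h2 (norm_c0_lower s)
    _ = (4*t/Real.sqrt 2) * Real.exp _ := by ring

lemma G_tendsto (t : ℝ) (ht : 0 < t) (w : ℂ) :
    Tendsto (fun s : ℝ => -(4*(t:ℂ)) * Complex.exp (-Complex.I * (c0path s - w)^2 / (4*(t:ℂ)))
        / (c0path s - Complex.I)) atTop (𝓝 0) ∧
    Tendsto (fun s : ℝ => -(4*(t:ℂ)) * Complex.exp (-Complex.I * (c0path s - w)^2 / (4*(t:ℂ)))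
        / (c0path s - Complex.I)) atBot (𝓝 0) := by
  obtain ⟨hq1, hq2⟩ := q_atBot t ht w
  have hB1 : Tendsto (fun s : ℝ => (4*t/Real.sqrt 2) *
      Real.exp ((bC t).re * s^2 + (cC t w).re * s + (dC t w).re)) atTop (𝓝 0) := by
    have := (Real.tendsto_exp_atBot.comp hq1).const_mul (4*t/Real.sqrt 2)
    simpa using this
  have hB2 : Tendsto (fun s : ℝ => (4*t/Real.sqrt 2) *
      Real.exp ((bC t).re * s^2 + (cC t w).re * s + (dC t w).re)) atBot (𝓝 0) := by
    have := (Real.tendsto_exp_atBot.comp hq2).const_mul (4*t/Real.sqrt 2)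
    simpa using this
  exact ⟨squeeze_zero_norm (G_norm_bound t ht w) hB1,
    squeeze_zero_norm (G_norm_bound t ht w) hB2⟩

lemma Dfun_eq (t : ℝ) (ht : 0 < t) (w : ℂ) :
    Dfun t w = ((t:ℂ) - w - Complex.I) * (Kc t * Complex.exp (-(Real.pi/4)*Complex.I)) := by
  set g := fun s : ℝ => Complex.exp (-Complex.I * (c0path s - w)^2 / (4*(t:ℂ))) *
      Complex.exp (-(Real.pi/4)*Complex.I) with hg_def
  set f := fun s : ℝ => Complex.exp (-Complex.I * (c0path s - w) ^ 2 / (4 * (t:ℂ))) *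
      (((t : ℂ) - w + Complex.I) + 2 * Complex.I * (Complex.I - w) / (c0path s - Complex.I)
        + 4 * t / (c0path s - Complex.I) ^ 2) *
      Complex.exp (-(Real.pi / 4) * Complex.I) with hf_def
  have hg := integrable_g t ht w
  have hf := integrable_f t ht w
  have hgc : Integrable (fun s : ℝ => ((t:ℂ) - w - Complex.I) * g s) :=
    hg.const_mul ((t:ℂ) - w - Complex.I)
  have hsub : Integrable (fun s : ℝ => f s - ((t:ℂ) - w - Complex.I) * g s) := hf.sub hgc
  obtain ⟨htop, hbot⟩ := G_tendsto t ht w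
  have hzero : (∫ s : ℝ, (f s - ((t:ℂ) - w - Complex.I) * g s)) = 0 := by
    have := integral_of_hasDerivAt_of_tendsto (f := fun u : ℝ =>
        -(4*(t:ℂ)) * Complex.exp (-Complex.I * (c0path u - w)^2 / (4*(t:ℂ)))
          / (c0path u - Complex.I))
      (fun s => hasDerivG t ht.ne' w s) hsub hbot htop
    rw [this]; ring
  have h1 : Dfun t w = ∫ s : ℝ, (((t:ℂ) - w - Complex.I) * g s
      + (f s - ((t:ℂ) - w - Complex.I) * g s)) := by
    rw [Dfun]
    exact integral_congr_ae (Eventually.of_forall fun s => by ring)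
  rw [h1, integral_add hgc hsub, hzero, add_zero, integral_const_mul]
  congr 1
  simp only [hg_def]
  exact gaussK t ht w

/-- `D(t,x) = (t-(x+i)) ∫_{C₀} e^{-i(z-x)²/(4t)} dz`, and the one-soliton formula
`-2 Im(∂ₓ log D(t,x)) = 2/((x-t)²+1)`. -/
theorem stmt14 (t : ℝ) (ht : 0 < t) (x : ℝ) :
    Dfun t x
        = ((t : ℂ) - ((x : ℂ) + Complex.I)) *
          ∫ s : ℝ, Complex.exp (-Complex.I * (c0path s - (x : ℂ)) ^ 2 / (4 * t)) *
            Complex.exp (-(Real.pi / 4) * Complex.I) ∧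
    -2 * ((deriv (fun w : ℂ => Dfun t w) (x : ℂ) / Dfun t (x : ℂ)).im) = 2 / ((x - t) ^ 2 + 1) := by
  have hKω : Kc t * Complex.exp (-(Real.pi/4)*Complex.I) ≠ 0 :=
    mul_ne_zero (Kc_ne t ht.ne') (Complex.exp_ne_zero _)
  have hden : ((t:ℂ) - (x:ℂ) - Complex.I) ≠ 0 := by
    intro h
    have := congrArg Complex.im h
    simp at this
  constructor
  · rw [Dfun_eq t ht, gaussK t ht]
    ring
  · have hfun : (fun w : ℂ => Dfun t w)
        = fun w => ((t:ℂ) - w - Complex.I) * (Kc t * Complex.exp (-(Real.pi/4)*Complex.I)) :=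
      funext (Dfun_eq t ht)
    have hder : deriv (fun w : ℂ => Dfun t w) (x:ℂ)
        = -(Kc t * Complex.exp (-(Real.pi/4)*Complex.I)) := by
      rw [hfun]
      have h1 : HasDerivAt (fun w : ℂ => ((t:ℂ) - w - Complex.I)
          * (Kc t * Complex.exp (-(Real.pi/4)*Complex.I)))
          ((-1) * (Kc t * Complex.exp (-(Real.pi/4)*Complex.I))) (x:ℂ) := by
        have h0 : HasDerivAt (fun w : ℂ => (t:ℂ) - w - Complex.I) (-1) (x:ℂ) := by
          simpa using (((hasDerivAt_id (x:ℂ)).const_sub ((t:ℂ))).sub_const Complex.I)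
        exact h0.mul_const _
      rw [h1.deriv]; ring
    have hratio : deriv (fun w : ℂ => Dfun t w) (x:ℂ) / Dfun t (x:ℂ)
        = -((t:ℂ) - (x:ℂ) - Complex.I)⁻¹ := by
      rw [hder, Dfun_eq t ht, div_eq_iff (mul_ne_zero hden hKω)]
      field_simp
    rw [hratio]
    have him : (-((t:ℂ) - (x:ℂ) - Complex.I)⁻¹).im = -(1 / ((t - x)^2 + 1)) := by
      have hz : ((t:ℂ) - (x:ℂ) - Complex.I) = Complex.mk (t - x) (-1) := by
        apply Complex.ext <;> simp
      rw [hz]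
      simp [Complex.inv_im, Complex.normSq_apply]
      ring_nf
    rw [him]
    have hpos : ((x:ℝ) - t)^2 + 1 ≠ 0 := by positivity
    have : ((t:ℝ) - x)^2 = (x - t)^2 := by ring
    rw [this]
    field_simp
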